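/- Let W = {ω_0, …, ω_{n-1}} be a basis of F_{q^n} over F_q and M_W its Moore matrix. Then det(M_W)^{q-1} = (-1)^{n-1}. In particular, if n is odd then det(M_W) ∈ F_q^*. -/

import Mathlib

/-- The Moore matrix of `s : Fin n → L`, with `(i,j)` entry `s i ^ q ^ j`, `q = |K|`. -/
def mooreMatrix (K : Type*) [Field K] [Fintype K] {L : Type*} [Field L] {n : ℕ}
    (s : Fin n → L) : Matrix (Fin n) (Fin n) L :=
  Matrix.of fun i j => s i ^ Fintype.card K ^ (j : ℕ)

theorem stmt7 (K L : Type*) [Field K] [Fintype K] [Field L] [Fintype L] [Algebra K L]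
    (n : ℕ) (ω : Fin n → L) (hω : ∃ b : Module.Basis (Fin n) K L, ∀ i, b i = ω i) :
    (mooreMatrix K ω).det ^ (Fintype.card K - 1) = (-1 : L) ^ (n - 1) ∧
      (Odd n → (mooreMatrix K ω).det ∈ Set.range (algebraMap K L) ∧ (mooreMatrix K ω).det ≠ 0) := by
  classical
  rcases n with - | n'
  · constructor
    · simp [Matrix.det_fin_zero]
    · intro h
      simp [Nat.odd_iff] at h
  obtain ⟨b, hb⟩ := hω
  have hbω : ⇑b = ω := funext hb
  set q := Fintype.card K with hqdef
  have hq1 : 1 < q := Fintype.one_lt_card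
  have hcardL : Fintype.card L = q ^ (n' + 1) := by
    have := Module.card_fintype b
    simpa using this
  -- characteristic setup
  obtain ⟨p, hp⟩ := CharP.exists K
  haveI : CharP K p := hp
  have hpprime : p.Prime := by
    rcases FiniteField.card K p with ⟨m, hm, -⟩
    exact hm
  haveI := Fact.mk hpprime
  haveI : CharP L p := charP_of_injective_algebraMap (algebraMap K L).injective p
  obtain ⟨m, -, hqm⟩ := FiniteField.card K p
  have hqm' : q = p ^ (m : ℕ) := hqm
  -- additivity of x ↦ x ^ q ^ k
  have hadd : ∀ (k : ℕ) (x y : L), (x + y) ^ q ^ k = x ^ q ^ k + y ^ q ^ k := by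
    intro k x y
    rw [hqm', ← pow_mul]
    exact add_pow_char_pow x y p ((m : ℕ) * k)
  have hKfix : ∀ (k : ℕ) (a : K), (algebraMap K L a) ^ q ^ k = algebraMap K L a := by
    intro k a
    rw [← map_pow, FiniteField.pow_card_pow]
  -- det ≠ 0
  have hdet : (mooreMatrix K ω).det ≠ 0 := by
    intro h0
    obtain ⟨c, hc0, hc⟩ := Matrix.exists_mulVec_eq_zero_iff.mpr h0
    -- the linearized polynomial map
    let g : L →ₗ[K] L :=
      { toFun := fun x => ∑ j : Fin (n' + 1), c j * x ^ q ^ (j : ℕ)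
        map_add' := by
          intro x y
          rw [← Finset.sum_add_distrib]
          exact Finset.sum_congr rfl fun j _ => by rw [hadd, mul_add]
        map_smul' := by
          intro a x
          simp only [RingHom.id_apply]
          rw [Finset.smul_sum]
          refine Finset.sum_congr rfl fun j _ => ?_
          rw [Algebra.smul_def, Algebra.smul_def, mul_pow, hKfix]
          ring }
    have hgω : ∀ i, g (ω i) = 0 := by
      intro i
      have h := congr_fun hc i
      simp only [Matrix.mulVec, dotProduct, mooreMatrix, Matrix.of_apply,
        Pi.zero_apply] at h
      show ∑ j : Fin (n' + 1), c j * ω i ^ q ^ (j : ℕ) = 0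
      rw [← h]
      exact Finset.sum_congr rfl fun j _ => mul_comm _ _
    have hg0 : ∀ x : L, g x = 0 := by
      intro x
      have hx : x ∈ Submodule.span K (Set.range ω) := by
        rw [← hbω, Module.Basis.span_eq]; trivial
      induction hx using Submodule.span_induction with
      | mem y hy => obtain ⟨i, rfl⟩ := hy; exact hgω i
      | zero => exact map_zero g
      | add y z _ _ hy hz => rw [map_add, hy, hz, add_zero]
      | smul a y _ hy => rw [map_smul, hy, smul_zero]
    -- turn into a polynomial identity
    let f : Polynomial L := ∑ j : Fin (n' + 1), Polynomial.C (c j) * Polynomial.X ^ (q ^ (j : ℕ))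
    have hfdeg : f.natDegree < Fintype.card L := by
      have h1 : f.natDegree ≤ q ^ n' := by
        refine Polynomial.natDegree_sum_le_of_forall_le _ _ fun j _ => ?_
        refine (Polynomial.natDegree_C_mul_le _ _).trans ?_
        rw [Polynomial.natDegree_X_pow]
        exact Nat.pow_le_pow_right (by omega) (by omega)
      have h2 : q ^ n' < q ^ (n' + 1) := Nat.pow_lt_pow_right hq1 (by omega)
      omega
    have hfeval : ∀ x : L, f.eval x = 0 := by
      intro x
      have hx := hg0 x
      show Polynomial.eval x (∑ j : Fin (n' + 1), Polynomial.C (c j) * Polynomial.X ^ (q ^ (j : ℕ))) = 0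
      rw [Polynomial.eval_finset_sum]
      simp only [Polynomial.eval_mul, Polynomial.eval_C, Polynomial.eval_pow, Polynomial.eval_X]
      exact hx
    have hf0 : f = 0 :=
      Polynomial.eq_zero_of_natDegree_lt_card_of_eval_eq_zero f Function.injective_id
        hfeval (by simpa using hfdeg)
    -- extract a coefficient
    obtain ⟨j₀, hj₀⟩ : ∃ j, c j ≠ 0 := by
      by_contra h
      push_neg at h
      exact hc0 (funext h)
    have hcoeff : f.coeff (q ^ (j₀ : ℕ)) = c j₀ := by
      rw [Polynomial.finset_sum_coeff, Finset.sum_eq_single j₀]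
      · simp
      · intro j _ hj
        rw [Polynomial.coeff_C_mul, Polynomial.coeff_X_pow, if_neg, mul_zero]
        intro h
        exact hj (Fin.ext (Nat.pow_right_injective hq1 h.symm))
      · simp
    rw [hf0] at hcoeff
    simp at hcoeff
    exact hj₀ hcoeff.symm
  -- main identity
  have hmain : (mooreMatrix K ω).det ^ (q - 1) = (-1 : L) ^ n' := by
    let σ : L →+* L :=
      { toFun := (· ^ q)
        map_one' := one_pow q
        map_mul' := fun x y => mul_pow x y q
        map_zero' := zero_pow (by omega)
        map_add' := fun x y => by simpa using hadd 1 x y }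
    have key : ((mooreMatrix K ω).map σ) = (mooreMatrix K ω).submatrix id (finRotate (n' + 1)) := by
      ext i j
      simp only [Matrix.map_apply, Matrix.submatrix_apply, id_eq, mooreMatrix, Matrix.of_apply]
      show (ω i ^ q ^ (j : ℕ)) ^ q = ω i ^ q ^ ((finRotate (n' + 1) j : Fin (n' + 1)) : ℕ)
      rw [← pow_mul, ← pow_succ]
      rcases eq_or_ne j (Fin.last n') with rfl | hj
      · have h1 : ((finRotate (n' + 1) (Fin.last n') : Fin (n' + 1)) : ℕ) = 0 := by
          simp [finRotate_succ_apply]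
        rw [h1, pow_zero, pow_one]
        have h2 : (Fin.last n' : ℕ) + 1 = n' + 1 := by simp
        rw [h2, ← hcardL]
        exact FiniteField.pow_card (ω i)
      · have hlt : (j : ℕ) < n' := by
          have h1 : (j : ℕ) < n' + 1 := j.isLt
          have h2 : (j : ℕ) ≠ n' := fun h => hj (Fin.ext (by simp [h]))
          omega
        have h1 : ((finRotate (n' + 1) j : Fin (n' + 1)) : ℕ) = (j : ℕ) + 1 := by
          rw [finRotate_succ_apply]
          exact Fin.val_add_one_of_lt (by rwa [Fin.lt_iff_val_lt_val, Fin.val_last])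
        rw [h1]
    have hdq : (mooreMatrix K ω).det ^ q = (-1 : L) ^ n' * (mooreMatrix K ω).det := by
      have h1 : σ ((mooreMatrix K ω).det) = ((mooreMatrix K ω).map σ).det :=
        RingHom.map_det σ _
      have h2 : σ ((mooreMatrix K ω).det) = (mooreMatrix K ω).det ^ q := rfl
      rw [key, Matrix.det_permute' (finRotate (n' + 1)), sign_finRotate] at h1
      rw [← h2, h1]
      push_cast
      ring
    have h3 : (mooreMatrix K ω).det ^ (q - 1) * (mooreMatrix K ω).det
        = (-1 : L) ^ n' * (mooreMatrix K ω).det := by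
      rw [← pow_succ]
      have h4 : q - 1 + 1 = q := by omega
      rw [h4, hdq]
    exact mul_right_cancel₀ hdet h3
  refine ⟨by simpa using hmain, fun hodd => ⟨?_, hdet⟩⟩
  -- n odd: det ∈ range algebraMap
  have hn1 : Even n' := by
    rcases hodd with ⟨k, hk⟩
    exact ⟨k, by omega⟩
  have hfix : (mooreMatrix K ω).det ^ q = (mooreMatrix K ω).det := by
    have h5 : (mooreMatrix K ω).det ^ (q - 1) = 1 := by rw [hmain, hn1.neg_one_pow]
    calc (mooreMatrix K ω).det ^ q
        = (mooreMatrix K ω).det ^ (q - 1) * (mooreMatrix K ω).det := by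
          rw [← pow_succ]; congr 1; omega
      _ = (mooreMatrix K ω).det := by rw [h5, one_mul]
  -- counting argument
  by_contra hmem
  set d := (mooreMatrix K ω).det with hd
  let A : Finset L := Finset.univ.image (algebraMap K L)
  have hcardA : A.card = q := by
    rw [Finset.card_image_of_injective _ (algebraMap K L).injective, Finset.card_univ]
  have hdA : d ∉ A := by
    intro h
    obtain ⟨a, -, ha⟩ := Finset.mem_image.mp h
    exact hmem ⟨a, ha⟩
  let P : Polynomial L := Polynomial.X ^ q - Polynomial.X
  have hPne : P ≠ 0 := FiniteField.X_pow_card_sub_X_ne_zero L hq1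
  have hroots : (insert d A).val ⊆ P.roots := by
    intro x hx
    rw [Polynomial.mem_roots hPne]
    have hx' : x ∈ insert d A := hx
    rcases Finset.mem_insert.mp hx' with rfl | hxA
    · simp only [P, Polynomial.IsRoot, Polynomial.eval_sub, Polynomial.eval_pow,
        Polynomial.eval_X]
      rw [hfix]
      ring
    · obtain ⟨a, -, rfl⟩ := Finset.mem_image.mp hxA
      have h6 := hKfix 1 a
      rw [pow_one] at h6
      simp only [P, Polynomial.IsRoot, Polynomial.eval_sub, Polynomial.eval_pow,
        Polynomial.eval_X]
      rw [h6]
      ring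
  have h7 := Polynomial.card_le_degree_of_subset_roots hroots
  rw [Finset.card_insert_of_notMem hdA, hcardA] at h7
  rw [FiniteField.X_pow_card_sub_X_natDegree_eq L hq1] at h7
  omega
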